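/- Let (f, p̂) be a classifier, bin a binning function, and (x_1,y_1),…,(x_N,y_N) ∈ X × Y a finite dataset with N ≥ 1. Let (k_γ)_{γ>0} be a family of kernels k_γ : X × X → (0,∞) such that for every pair of dataset points x_j, x_i we have k_γ(x_j, x_i) → 1 as γ → ∞. Then the maximum local calibration error MLCE_γ = max_{1≤j≤N} LCE_γ(x_j) converges, as γ → ∞, to the maximum calibration error MCE = max over nonempty bins B of |conf(B) − acc(B)|. -/

import Mathlib

open Filter

private lemma tendsto_sup'_aux {ι : Type*} {s : Finset ι} (hs : s.Nonempty)
    {f : ι → ℝ → ℝ} {a : ι → ℝ} {l : Filter ℝ}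
    (h : ∀ i ∈ s, Tendsto (f i) l (nhds (a i))) :
    Tendsto (fun γ => s.sup' hs (fun i => f i γ)) l (nhds (s.sup' hs a)) := by
  induction hs using Finset.Nonempty.cons_induction with
  | singleton i => simpa using h i (Finset.mem_singleton_self i)
  | cons i t hit ht ih =>
    simp only [Finset.sup'_cons ht]
    exact (h i (by simp)).max (ih fun j hj => h j (Finset.mem_cons_of_mem hj))

/-- As the kernel bandwidth `γ → ∞` (so that `k_γ(x_j, x_i) → 1` for all dataset
points), the maximum local calibration error `MLCE_γ = max_j LCE_γ(x_j)`
converges to the maximum calibration error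
`MCE = max over nonempty bins B of |conf(B) − acc(B)|`. -/
theorem stmt_0 {X Y : Type*} [DecidableEq Y] (m : ℕ)
    (f : X → Y) (p : X → ℝ) (bin : ℝ → Fin m)
    (hp : ∀ x : X, 0 ≤ p x ∧ p x ≤ 1)
    (N : ℕ) (hN : 1 ≤ N) (x : Fin N → X) (y : Fin N → Y)
    (k : ℝ → X → X → ℝ)
    (hk_pos : ∀ γ > (0:ℝ), ∀ a b : X, 0 < k γ a b)
    (hk_lim : ∀ i j : Fin N, Tendsto (fun γ : ℝ => k γ (x j) (x i)) atTop (nhds 1)) :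
    Tendsto
      (fun γ : ℝ =>
        -- MLCE_γ : the maximum over dataset points x_j of LCE_γ(x_j)
        Finset.univ.sup' (Finset.univ_nonempty_iff.mpr ⟨⟨0, hN⟩⟩)
          (fun j : Fin N =>
            |∑ i ∈ Finset.univ.filter fun i : Fin N => bin (p (x i)) = bin (p (x j)),
                (p (x i) - if f (x i) = y i then (1:ℝ) else 0) * k γ (x j) (x i)| /
              ∑ i ∈ Finset.univ.filter fun i : Fin N => bin (p (x i)) = bin (p (x j)),
                k γ (x j) (x i)))
      atTop
      (nhds
        -- MCE : the maximum over nonempty bins of |conf(B) − acc(B)|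
        ((Finset.univ.filter fun b : Fin m => ∃ i : Fin N, bin (p (x i)) = b).sup'
          ⟨bin (p (x ⟨0, hN⟩)),
            Finset.mem_filter.mpr ⟨Finset.mem_univ _, ⟨⟨0, hN⟩, rfl⟩⟩⟩
          (fun b : Fin m =>
            |(∑ i ∈ Finset.univ.filter fun i : Fin N => bin (p (x i)) = b, p (x i)) /
                (Finset.univ.filter fun i : Fin N => bin (p (x i)) = b).card -
              (∑ i ∈ Finset.univ.filter fun i : Fin N => bin (p (x i)) = b,
                  if f (x i) = y i then (1:ℝ) else 0) /
                (Finset.univ.filter fun i : Fin N => bin (p (x i)) = b).card|))) := by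
  set g : Fin m → ℝ := fun b : Fin m =>
      |(∑ i ∈ Finset.univ.filter fun i : Fin N => bin (p (x i)) = b, p (x i)) /
          (Finset.univ.filter fun i : Fin N => bin (p (x i)) = b).card -
        (∑ i ∈ Finset.univ.filter fun i : Fin N => bin (p (x i)) = b,
            if f (x i) = y i then (1:ℝ) else 0) /
          (Finset.univ.filter fun i : Fin N => bin (p (x i)) = b).card| with hg
  set β : Fin N → Finset (Fin N) :=
      fun j => Finset.univ.filter fun i : Fin N => bin (p (x i)) = bin (p (x j)) with hβ
  set L : Fin N → ℝ := fun j =>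
      |∑ i ∈ β j, (p (x i) - if f (x i) = y i then (1:ℝ) else 0)| / (β j).card with hL
  have hne : (Finset.univ (α := Fin N)).Nonempty := Finset.univ_nonempty_iff.mpr ⟨⟨0, hN⟩⟩
  have key : ∀ hh : (Finset.univ.filter fun b : Fin m =>
      ∃ i : Fin N, bin (p (x i)) = b).Nonempty,
      (Finset.univ.filter fun b : Fin m => ∃ i : Fin N, bin (p (x i)) = b).sup' hh g
      = Finset.univ.sup' hne L := by
    intro hh
    have himg : (Finset.univ.filter fun b : Fin m => ∃ i : Fin N, bin (p (x i)) = b)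
        = Finset.univ.image (fun j : Fin N => bin (p (x j))) := by
      ext b
      simp [eq_comm]
    have hLg : ∀ j : Fin N, g (bin (p (x j))) = L j := by
      intro j
      simp only [hg, hL, hβ]
      rw [div_sub_div_same, ← Finset.sum_sub_distrib, abs_div,
        abs_of_nonneg (by positivity : (0:ℝ) ≤ ((Finset.univ.filter fun i : Fin N =>
          bin (p (x i)) = bin (p (x j))).card : ℝ))]
    rw [Finset.sup'_congr hh himg (fun _ _ => rfl), Finset.sup'_image]
    exact Finset.sup'_congr _ rfl (fun j _ => hLg j)
  have hkey := key ⟨bin (p (x ⟨0, hN⟩)),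
    Finset.mem_filter.mpr ⟨Finset.mem_univ _, ⟨⟨0, hN⟩, rfl⟩⟩⟩
  rw [hkey]
  apply tendsto_sup'_aux hne
  intro j _
  have hjβ : j ∈ β j := by simp [hβ]
  have hcard : (0:ℝ) < (β j).card := by
    exact_mod_cast Finset.card_pos.mpr ⟨j, hjβ⟩
  have hnum : Tendsto (fun γ : ℝ =>
      ∑ i ∈ β j, (p (x i) - if f (x i) = y i then (1:ℝ) else 0) * k γ (x j) (x i)) atTop
      (nhds (∑ i ∈ β j, (p (x i) - if f (x i) = y i then (1:ℝ) else 0))) := by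
    have := tendsto_finset_sum (β j) (fun i _ =>
      ((hk_lim i j).const_mul (p (x i) - if f (x i) = y i then (1:ℝ) else 0)))
    simpa using this
  have hden : Tendsto (fun γ : ℝ => ∑ i ∈ β j, k γ (x j) (x i)) atTop
      (nhds ((β j).card : ℝ)) := by
    have := tendsto_finset_sum (β j) (fun i _ => hk_lim i j)
    simpa using this
  exact (hnum.abs.div hden hcard.ne')
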